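/- For a proper enhancement e on (V, b), the Gauss sum can be written γ(V_e) = √2^{m+n} · exp(πi·β/4) for a unique β ∈ ℤ/8 (the Brown invariant), where m = dim V and n = dim V^⊥. Equivalently: (γ(V_e))⁸ = 2^{4(m+n)}, i.e. γ(V_e)/√2^{m+n} is an 8th root of unity. -/
import Mathlib


/-- The nontrivial homomorphism `ZMod 2 → ZMod 4`, sending `1` to `2`. -/
def twice (a : ZMod 2) : ZMod 4 := 2 * a.val


open Complex

lemma I_pow_mod (n : ℕ) : I ^ (n % 4) = I ^ n := by
  conv_rhs => rw [← Nat.div_add_mod n 4, pow_add, pow_mul, I_pow_four, one_pow, one_mul]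

lemma I_pow_add (a c : ZMod 4) : I ^ (a + c).val = I ^ a.val * I ^ c.val := by
  rw [ZMod.val_add, I_pow_mod, pow_add]

lemma twice_val : ∀ t : ZMod 2, (twice t).val = 2 * t.val := by decide

lemma twice_add : ∀ s t : ZMod 2, twice (s + t) = twice s + twice t := by decide

lemma twice_self : ∀ t : ZMod 2, twice t + twice t = 0 := by decide

lemma I_pow_twice (t : ZMod 2) : I ^ (twice t).val = (-1 : ℂ) ^ t.val := by
  rw [twice_val, pow_mul, I_sq]

lemma neg_one_pow_add_one (a : ZMod 2) :
    ((-1 : ℂ)) ^ (a + 1).val = -(-1 : ℂ) ^ a.val := by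
  have h : a = 0 ∨ a = 1 := by revert a; decide
  rcases h with h | h <;> subst h
  · norm_num [show ((1:ZMod 2)).val = 1 by decide]
  · norm_num [show ((2:ZMod 2)).val = 0 by decide, show ((1:ZMod 2)).val = 1 by decide]

lemma char_sum (V : Type*) [AddCommGroup V] [Module (ZMod 2) V] [Fintype V]
    (L : V →ₗ[ZMod 2] ZMod 2) :
    ∑ x : V, ((-1 : ℂ)) ^ (L x).val
      = if L = 0 then (Fintype.card V : ℂ) else 0 := by
  split_ifs with h
  · subst h; simp
  · obtain ⟨x0, hx0⟩ : ∃ x0, L x0 ≠ 0 := by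
      by_contra hc
      push_neg at hc
      exact h (LinearMap.ext fun x => hc x)
    have hx1 : L x0 = 1 := by
      have : L x0 = 0 ∨ L x0 = 1 := by generalize L x0 = u; revert u; decide
      tauto
    have key : ∑ x : V, ((-1 : ℂ)) ^ (L x).val
        = -∑ x : V, ((-1 : ℂ)) ^ (L x).val := by
      conv_lhs => rw [← Fintype.sum_equiv (Equiv.addLeft x0)
        (fun x => ((-1 : ℂ)) ^ (L (x0 + x)).val)
        (fun x => ((-1 : ℂ)) ^ (L x).val) (fun x => rfl)]
      rw [← Finset.sum_neg_distrib]
      refine Finset.sum_congr rfl fun x _ => ?_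
      rw [map_add, hx1, add_comm, neg_one_pow_add_one]
    have h2 : (2:ℂ) * ∑ x : V, ((-1 : ℂ)) ^ (L x).val = 0 := by linear_combination key
    simpa using h2

lemma exists_char (V : Type*) [AddCommGroup V] [Module (ZMod 2) V]
    [FiniteDimensional (ZMod 2) V]
    (b : V →ₗ[ZMod 2] V →ₗ[ZMod 2] ZMod 2) (hsymm : ∀ x y, b x y = b y x) :
    ∃ c : V, ∀ x, b x x = b x c := by
  have hrr : ∀ r : ZMod 2, r * r = r := by decide
  have hadd : ∀ a : ZMod 2, a + a = 0 := by decide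
  let q : V →ₗ[ZMod 2] ZMod 2 :=
    { toFun := fun x => b x x
      map_add' := fun x y => by
        simp only [map_add, LinearMap.add_apply]
        rw [hsymm y x]
        have h0 : b x y + b x y = 0 := hadd _
        linear_combination h0
      map_smul' := fun r x => by
        simp only [map_smul, LinearMap.smul_apply, RingHom.id_apply, smul_eq_mul]
        rw [← mul_assoc, hrr] }
  have hle : LinearMap.range b ≤ (LinearMap.ker b).dualAnnihilator := by
    rintro φ ⟨s, rfl⟩
    rw [Submodule.mem_dualAnnihilator]
    intro w hw
    show b s w = 0
    rw [hsymm s w]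
    rw [LinearMap.mem_ker] at hw
    rw [hw]; rfl
  have h1 : Module.finrank (ZMod 2) (LinearMap.range b)
      + Module.finrank (ZMod 2) (LinearMap.ker b) = Module.finrank (ZMod 2) V :=
    LinearMap.finrank_range_add_finrank_ker b
  have h2 : Module.finrank (ZMod 2) ((LinearMap.ker b).dualAnnihilator)
      = Module.finrank (ZMod 2) (V ⧸ (LinearMap.ker b)) :=
    ((Subspace.quotEquivAnnihilator (LinearMap.ker b)).finrank_eq).symm
  have h3 : Module.finrank (ZMod 2) (V ⧸ (LinearMap.ker b))
      + Module.finrank (ZMod 2) (LinearMap.ker b) = Module.finrank (ZMod 2) V :=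
    Submodule.finrank_quotient_add_finrank _
  have heq : LinearMap.range b = (LinearMap.ker b).dualAnnihilator :=
    Submodule.eq_of_le_of_finrank_eq hle (by rw [h2]; omega)
  have hq : q ∈ (LinearMap.ker b).dualAnnihilator := by
    rw [Submodule.mem_dualAnnihilator]
    intro w hw
    show b w w = 0
    rw [LinearMap.mem_ker] at hw
    rw [hw]; rfl
  rw [← heq] at hq
  obtain ⟨c, hc⟩ := hq
  exact ⟨c, fun x => by rw [hsymm x c, hc]; rfl⟩

open Complex in
theorem gauss_sum_eighth_power (V : Type*) [AddCommGroup V] [Module (ZMod 2) V]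
    [FiniteDimensional (ZMod 2) V] [Fintype V]
    (b : V →ₗ[ZMod 2] V →ₗ[ZMod 2] ZMod 2) (hsymm : ∀ x y, b x y = b y x)
    (e : V → ZMod 4)
    (he : ∀ x y, e (x + y) = e x + e y + twice (b x y))
    (hproper : ∀ z : V, (∀ y, b z y = 0) → e z = 0) :
    (∑ x : V, I ^ (e x).val) ^ 8
      = 2 ^ (4 * (Module.finrank (ZMod 2) V
          + Module.finrank (ZMod 2) (LinearMap.ker b))) := by
  classical
  obtain ⟨c, hc⟩ := exists_char V b hsymm
  have he0 : e 0 = 0 := by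
    have h := he 0 0
    simp only [add_zero, map_zero, LinearMap.zero_apply,
      show twice 0 = 0 by decide] at h
    linear_combination -h
  have hx0 : ∀ x : V, x + x = 0 := by
    intro x
    have h := two_smul (ZMod 2) x
    rw [show (2 : ZMod 2) = 0 by decide, zero_smul] at h
    exact h.symm
  have h2e : ∀ x, e x + e x = twice (b x x) := by
    intro x
    have h := he x x
    rw [hx0 x, he0] at h
    linear_combination -h - twice_self (b x x)
  have hsq : (∑ x : V, I ^ (e x).val) ^ 2
      = I ^ (e c).val * ((Fintype.card V : ℂ)
          * (Fintype.card ↥(LinearMap.ker b) : ℂ)) := by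
    calc (∑ x : V, I ^ (e x).val) ^ 2
        = ∑ x : V, ∑ y : V, I ^ (e x).val * I ^ (e y).val := by
          rw [sq, Finset.sum_mul_sum]
      _ = ∑ x : V, ∑ s : V, I ^ (e s).val * (-1 : ℂ) ^ ((b (c + s)) x).val := by
          refine Finset.sum_congr rfl fun x _ => ?_
          rw [← Fintype.sum_equiv (Equiv.addLeft x)
            (fun s => I ^ (e x).val * I ^ (e (x + s)).val)
            (fun y => I ^ (e x).val * I ^ (e y).val) (fun s => rfl)]
          refine Finset.sum_congr rfl fun s _ => ?_
          rw [← I_pow_add]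
          have key : e x + e (x + s) = e s + twice (b (c + s) x) := by
            calc e x + e (x + s)
                = (e x + e x) + e s + twice (b x s) := by rw [he x s]; ring
              _ = twice (b x x) + e s + twice (b x s) := by rw [h2e x]
              _ = e s + (twice (b x c) + twice (b x s)) := by rw [hc x]; ring
              _ = e s + twice (b x c + b x s) := by rw [twice_add]
              _ = e s + twice (b x (c + s)) := by rw [map_add]
              _ = e s + twice (b (c + s) x) := by rw [hsymm]
          rw [key, I_pow_add, I_pow_twice]
      _ = ∑ s : V, I ^ (e s).val
            * (if b (c + s) = 0 then (Fintype.card V : ℂ) else 0) := by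
          rw [Finset.sum_comm]
          refine Finset.sum_congr rfl fun s _ => ?_
          rw [← char_sum V (b (c + s)), Finset.mul_sum]
      _ = ∑ z : V, (if z ∈ LinearMap.ker b
            then I ^ (e c).val * (Fintype.card V : ℂ) else 0) := by
          rw [← Fintype.sum_equiv (Equiv.addLeft c)
            (fun z => I ^ (e (c + z)).val
              * (if b (c + (c + z)) = 0 then (Fintype.card V : ℂ) else 0))
            (fun s => I ^ (e s).val
              * (if b (c + s) = 0 then (Fintype.card V : ℂ) else 0))
            (fun z => rfl)]
          refine Finset.sum_congr rfl fun z _ => ?_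
          rw [show c + (c + z) = z by rw [← add_assoc, hx0 c, zero_add]]
          rw [LinearMap.mem_ker]
          split_ifs with hz
          · have hez : e z = 0 := hproper z fun y => by rw [hz]; rfl
            have hbz : b c z = 0 := by rw [hsymm c z, hz]; rfl
            rw [he c z, hez, hbz, show twice 0 = 0 by decide, add_zero, add_zero]
          · rw [mul_zero]
      _ = I ^ (e c).val * ((Fintype.card V : ℂ)
            * (Fintype.card ↥(LinearMap.ker b) : ℂ)) := by
          rw [← Finset.sum_filter, Finset.sum_const,
            show (Finset.univ.filter (fun z => z ∈ LinearMap.ker b)).card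
              = Fintype.card ↥(LinearMap.ker b) from (Fintype.card_subtype _).symm,
            nsmul_eq_mul]
          ring
  have hV : ((Fintype.card V : ℂ)) = 2 ^ Module.finrank (ZMod 2) V := by
    have h := Module.card_eq_pow_finrank (K := ZMod 2) (V := V)
    rw [ZMod.card] at h
    exact_mod_cast congrArg (Nat.cast (R := ℂ)) h
  have hK : ((Fintype.card ↥(LinearMap.ker b) : ℂ))
      = 2 ^ Module.finrank (ZMod 2) ↥(LinearMap.ker b) := by
    have h := Module.card_eq_pow_finrank (K := ZMod 2) (V := ↥(LinearMap.ker b))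
    rw [ZMod.card] at h
    exact_mod_cast congrArg (Nat.cast (R := ℂ)) h
  rw [hV, hK] at hsq
  calc (∑ x : V, I ^ (e x).val) ^ 8
      = ((∑ x : V, I ^ (e x).val) ^ 2) ^ 4 := by ring
    _ = (I ^ (e c).val) ^ 4
        * ((2 : ℂ) ^ Module.finrank (ZMod 2) V
          * (2 : ℂ) ^ Module.finrank (ZMod 2) ↥(LinearMap.ker b)) ^ 4 := by
        rw [hsq]; ring
    _ = 2 ^ (4 * (Module.finrank (ZMod 2) V
          + Module.finrank (ZMod 2) (LinearMap.ker b))) := by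
        rw [← pow_mul, mul_comm ((e c).val) 4, pow_mul, I_pow_four, one_pow, one_mul,
          ← pow_add, ← pow_mul, Nat.mul_comm]
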